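/- Let A be an n×n real SPD matrix and M an n×n real matrix such that M + Mᵀ − A is SPD, and let M̄ = M (M + Mᵀ − A)⁻¹ Mᵀ be the symmetrized smoother. Then 2M̄ − A is SPD; in particular vᵀ A v ≤ 2 vᵀ M̄ v for all v ∈ ℝⁿ. -/

import Mathlib

open Matrix

lemma stmt_3_aux {n : ℕ} (M N : Matrix (Fin n) (Fin n) ℝ)
    (hs : Nᵀ = N) (h1 : N⁻¹ * N = 1) (h2 : N * N⁻¹ = 1) :
    (M - N) * N⁻¹ * (M - N)ᵀ = M * N⁻¹ * Mᵀ - M - Mᵀ + N := by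
  have ht : (M - N)ᵀ = Mᵀ - N := by rw [transpose_sub, hs]
  rw [ht]
  calc (M - N) * N⁻¹ * (Mᵀ - N)
      = M * N⁻¹ * Mᵀ - M * (N⁻¹ * N) - (N * N⁻¹) * Mᵀ + (N * N⁻¹) * N := by
        noncomm_ring
    _ = M * N⁻¹ * Mᵀ - M - Mᵀ + N := by rw [h1, h2]; simp

/-- 2M̄ − A is SPD, where M̄ = M (M + Mᵀ − A)⁻¹ Mᵀ is the symmetrized smoother;
in particular vᵀ A v ≤ 2 vᵀ M̄ v for all v. -/
theorem stmt_3 {n : ℕ}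
    (A M : Matrix (Fin n) (Fin n) ℝ) (hA : A.PosDef)
    (hM : (M + Mᵀ - A).PosDef) :
    ((2 : ℝ) • (M * (M + Mᵀ - A)⁻¹ * Mᵀ) - A).PosDef ∧
    ∀ v : Fin n → ℝ,
      v ⬝ᵥ A.mulVec v ≤ 2 * (v ⬝ᵥ (M * (M + Mᵀ - A)⁻¹ * Mᵀ).mulVec v) := by
  set N := M + Mᵀ - A with hN
  have hNsymm : Nᵀ = N := by
    have hAs : Aᵀ = A := hA.isHermitian.eq
    simp [hN, transpose_sub, transpose_add, hAs, add_comm]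
  have hNdet : IsUnit N.det := isUnit_iff_ne_zero.mpr (ne_of_gt hM.det_pos)
  have hNinv : N * N⁻¹ = 1 := mul_nonsing_inv N hNdet
  have hNinv' : N⁻¹ * N = 1 := nonsing_inv_mul N hNdet
  have hNinvPD : (N⁻¹).PosDef := hM.inv
  have expand := stmt_3_aux M N hNsymm hNinv' hNinv
  -- key identity
  have key : (2 : ℝ) • (M * N⁻¹ * Mᵀ) - A
      = A + ((M - N) * N⁻¹ * (M - N)ᵀ + (M - N) * N⁻¹ * (M - N)ᵀ) := by
    rw [expand, hN]
    ext i j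
    simp [Matrix.add_apply, Matrix.sub_apply, Matrix.smul_apply]
    ring
  have hConj : ((M - N) * N⁻¹ * (M - N)ᵀ).PosSemidef := by
    have := hNinvPD.posSemidef.mul_mul_conjTranspose_same (M - N)
    simpa [conjTranspose_eq_transpose_of_trivial] using this
  have hPD : ((2 : ℝ) • (M * N⁻¹ * Mᵀ) - A).PosDef := by
    rw [key]
    exact hA.add_posSemidef (hConj.add hConj)
  refine ⟨hPD, fun v => ?_⟩
  have := hPD.posSemidef.dotProduct_mulVec_nonneg v
  simp only [sub_mulVec, smul_mulVec, dotProduct_sub, dotProduct_smul,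
    smul_eq_mul, star_trivial] at this
  linarith
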